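/- If a univariate distribution F supports a negative orthant dependent (NOD) n-joint mix, then F supports an exchangeable NOD n-joint mix. -/

import Mathlib

open MeasureTheory ProbabilityTheory
open scoped ENNReal

/-- Negative lower orthant dependence. -/
def NLOD {Ω : Type*} [MeasurableSpace Ω] {n : ℕ} (P : Measure Ω) (X : Fin n → Ω → ℝ) : Prop :=
  ∀ t : Fin n → ℝ, P {ω | ∀ i, X i ω ≤ t i} ≤ ∏ i, P {ω | X i ω ≤ t i}

/-- Negative upper orthant dependence. -/
def NUOD {Ω : Type*} [MeasurableSpace Ω] {n : ℕ} (P : Measure Ω) (X : Fin n → Ω → ℝ) : Prop :=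
  ∀ t : Fin n → ℝ, P {ω | ∀ i, t i < X i ω} ≤ ∏ i, P {ω | t i < X i ω}

/-- Negative orthant dependence. -/
def NOD {Ω : Type*} [MeasurableSpace Ω] {n : ℕ} (P : Measure Ω) (X : Fin n → Ω → ℝ) : Prop :=
  NLOD P X ∧ NUOD P X

/-- If `F` supports an NOD `n`-joint mix then `F` supports an exchangeable NOD `n`-joint mix. -/
theorem stmt6 {n : ℕ} (F : Measure ℝ) [IsProbabilityMeasure F]
    (h : ∃ (Ω : Type) (_ : MeasurableSpace Ω) (P : Measure Ω) (_ : IsProbabilityMeasure P)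
        (X : Fin n → Ω → ℝ),
      (∀ i, Measurable (X i)) ∧ (∀ i, Measure.map (X i) P = F) ∧
      (∃ c : ℝ, ∀ᵐ ω ∂P, ∑ i, X i ω = c) ∧ NOD P X) :
    ∃ (Ω : Type) (_ : MeasurableSpace Ω) (P : Measure Ω) (_ : IsProbabilityMeasure P)
        (X : Fin n → Ω → ℝ),
      (∀ i, Measurable (X i)) ∧ (∀ i, Measure.map (X i) P = F) ∧
      (∃ c : ℝ, ∀ᵐ ω ∂P, ∑ i, X i ω = c) ∧ NOD P X ∧
      (∀ π : Equiv.Perm (Fin n),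
        Measure.map (fun ω => fun i => X (π i) ω) P
          = Measure.map (fun ω => fun i => X i ω) P) := by
    classical
  obtain ⟨Ω, mΩ, P, hP, X, hXm, hXmap, ⟨c, hc⟩, hNL, hNU⟩ := h
  set G := Equiv.Perm (Fin n) with hG
  letI : MeasurableSpace G := ⊤
  haveI : MeasurableSingletonClass G := ⟨fun _ => trivial⟩
  set Q : Measure G := (PMF.uniformOfFintype G).toMeasure with hQ
  haveI : IsProbabilityMeasure Q := PMF.toMeasure.isProbabilityMeasure _
  set P' : Measure (Ω × G) := P.prod Q with hP'
  haveI : IsProbabilityMeasure P' := by exact MeasureTheory.Measure.prod.instIsProbabilityMeasure _ _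
  set Y : Fin n → Ω × G → ℝ := fun i p => X (p.2 i) p.1 with hY
  have hQs : ∀ σ : G, Q {σ} = ((Nat.factorial n : ℝ≥0∞))⁻¹ := by
    intro σ
    rw [hQ, PMF.toMeasure_apply_singleton _ _ (measurableSet_singleton σ),
      PMF.uniformOfFintype_apply]
    congr 1
    norm_cast
    rw [Fintype.card_perm, Fintype.card_fin]
  have hYm : ∀ i, Measurable (Y i) := by
    intro i
    exact measurable_from_prod_countable_left (fun σ => hXm (σ i))
  -- key: measure of a measurable set in the product as a finite sum
  have key : ∀ s : Set (Ω × G), MeasurableSet s →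
      P' s = ∑ σ : G, Q {σ} * P ((fun ω => (ω, σ)) ⁻¹' s) := by
    intro s hs
    rw [hP', Measure.prod_apply_symm hs, lintegral_fintype]
    exact Finset.sum_congr rfl fun σ _ => mul_comm _ _
  have hsum1 : ∑ σ : G, Q {σ} = 1 := by
    rw [Finset.sum_congr rfl fun σ _ => hQs σ, Finset.sum_const, Finset.card_univ,
      Fintype.card_perm, Fintype.card_fin, nsmul_eq_mul]
    exact ENNReal.mul_inv_cancel (by exact_mod_cast (Nat.factorial_pos n).ne')
      (ENNReal.natCast_ne_top _)
  -- sets for single variables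
  have hset : ∀ (j : Fin n) (s : Set ℝ), MeasurableSet s → P (X j ⁻¹' s) = F s := by
    intro j s hs
    rw [← hXmap j, Measure.map_apply (hXm j) hs]
  have hYmap : ∀ i, Measure.map (Y i) P' = F := by
    intro i
    ext s hs
    rw [Measure.map_apply (hYm i) hs, key _ ((hYm i) hs)]
    have : ∀ σ : G, P ((fun ω => (ω, σ)) ⁻¹' (Y i ⁻¹' s)) = F s := by
      intro σ
      exact hset (σ i) s hs
    simp_rw [this]
    rw [← Finset.sum_mul, hsum1, one_mul]
  refine ⟨Ω × G, inferInstance, P', inferInstance, Y, hYm, hYmap, ⟨c, ?_⟩, ⟨?_, ?_⟩, ?_⟩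
  · -- joint mix
    have hms : MeasurableSet {p : Ω × G | ∑ i, Y i p = c} := by
      have : Measurable fun p : Ω × G => ∑ i, Y i p := by
        exact Finset.measurable_sum _ fun i _ => hYm i
      exact this (measurableSet_singleton c)
    rw [MeasureTheory.ae_iff]
    have hcompl : {a : Ω × G | ¬ ∑ i, Y i a = c} = {p : Ω × G | ∑ i, Y i p = c}ᶜ := rfl
    rw [hcompl, key _ hms.compl]
    have : ∀ σ : G, P ((fun ω => (ω, σ)) ⁻¹' {p : Ω × G | ∑ i, Y i p = c}ᶜ) = 0 := by
      intro σ
      have : (fun ω => (ω, σ)) ⁻¹' {p : Ω × G | ∑ i, Y i p = c}ᶜ ⊆ {ω | ¬ ∑ j, X j ω = c} := by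
        intro ω hω
        simp only [Set.mem_preimage, Set.mem_compl_iff, Set.mem_setOf_eq] at hω ⊢
        intro hsum
        exact hω (by rw [hY]; simpa using (Equiv.sum_comp σ (fun j => X j ω)).trans hsum)
      exact measure_mono_null this (by rw [← MeasureTheory.ae_iff]; exact hc)
    refine Finset.sum_eq_zero fun σ _ => ?_
    rw [this σ, mul_zero]
  · -- NLOD
    intro t
    have hAm : ∀ (j : Fin n) (r : ℝ), MeasurableSet {ω | X j ω ≤ r} :=
      fun j r => (hXm j) measurableSet_Iic
    have hmeas : MeasurableSet {p : Ω × G | ∀ i, Y i p ≤ t i} := by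
      rw [show {p : Ω × G | ∀ i, Y i p ≤ t i} = ⋂ i, Y i ⁻¹' Set.Iic (t i) by
        ext p; simp [Set.mem_iInter]]
      exact MeasurableSet.iInter fun i => (hYm i) measurableSet_Iic
    have hker : ∀ σ : G, P {ω | ∀ i, X (σ i) ω ≤ t i} ≤ ∏ i, F (Set.Iic (t i)) := by
      intro σ
      have h1 : {ω | ∀ i, X (σ i) ω ≤ t i} = {ω | ∀ j, X j ω ≤ t (σ.symm j)} := by
        ext ω
        constructor
        · intro hω j
          have := hω (σ.symm j); rwa [Equiv.apply_symm_apply] at this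
        · intro hω i
          have := hω (σ i); rwa [Equiv.symm_apply_apply] at this
      have h2 := hNL (fun j => t (σ.symm j))
      rw [h1]
      refine h2.trans_eq ?_
      have h3 : ∀ j : Fin n, P {ω | X j ω ≤ t (σ.symm j)} = F (Set.Iic (t (σ.symm j))) :=
        fun j => hset j _ measurableSet_Iic
      rw [Finset.prod_congr rfl fun j _ => h3 j]
      exact Equiv.prod_comp σ.symm (fun i => F (Set.Iic (t i)))
    have hK : ∀ i, P' {p : Ω × G | Y i p ≤ t i} = F (Set.Iic (t i)) := by
      intro i
      rw [show {p : Ω × G | Y i p ≤ t i} = Y i ⁻¹' Set.Iic (t i) from rfl,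
        ← Measure.map_apply (hYm i) measurableSet_Iic, hYmap i]
    calc P' {p : Ω × G | ∀ i, Y i p ≤ t i}
        = ∑ σ : G, Q {σ} * P ((fun ω => (ω, σ)) ⁻¹' {p : Ω × G | ∀ i, Y i p ≤ t i}) :=
          key _ hmeas
      _ ≤ ∑ σ : G, Q {σ} * ∏ i, F (Set.Iic (t i)) :=
          Finset.sum_le_sum fun σ _ => mul_le_mul_right (hker σ) _
      _ = ∏ i, F (Set.Iic (t i)) := by rw [← Finset.sum_mul, hsum1, one_mul]
      _ = ∏ i, P' {p : Ω × G | Y i p ≤ t i} := by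
          exact (Finset.prod_congr rfl fun i _ => (hK i).symm)
  · -- NUOD
    intro t
    have hmeas : MeasurableSet {p : Ω × G | ∀ i, t i < Y i p} := by
      rw [show {p : Ω × G | ∀ i, t i < Y i p} = ⋂ i, Y i ⁻¹' Set.Ioi (t i) by
        ext p; simp [Set.mem_iInter]]
      exact MeasurableSet.iInter fun i => (hYm i) measurableSet_Ioi
    have hker : ∀ σ : G, P {ω | ∀ i, t i < X (σ i) ω} ≤ ∏ i, F (Set.Ioi (t i)) := by
      intro σ
      have h1 : {ω | ∀ i, t i < X (σ i) ω} = {ω | ∀ j, t (σ.symm j) < X j ω} := by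
        ext ω
        constructor
        · intro hω j
          have := hω (σ.symm j); rwa [Equiv.apply_symm_apply] at this
        · intro hω i
          have := hω (σ i); rwa [Equiv.symm_apply_apply] at this
      have h2 := hNU (fun j => t (σ.symm j))
      rw [h1]
      refine h2.trans_eq ?_
      have h3 : ∀ j : Fin n, P {ω | t (σ.symm j) < X j ω} = F (Set.Ioi (t (σ.symm j))) :=
        fun j => hset j _ measurableSet_Ioi
      rw [Finset.prod_congr rfl fun j _ => h3 j]
      exact Equiv.prod_comp σ.symm (fun i => F (Set.Ioi (t i)))
    have hK : ∀ i, P' {p : Ω × G | t i < Y i p} = F (Set.Ioi (t i)) := by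
      intro i
      rw [show {p : Ω × G | t i < Y i p} = Y i ⁻¹' Set.Ioi (t i) from rfl,
        ← Measure.map_apply (hYm i) measurableSet_Ioi, hYmap i]
    calc P' {p : Ω × G | ∀ i, t i < Y i p}
        = ∑ σ : G, Q {σ} * P ((fun ω => (ω, σ)) ⁻¹' {p : Ω × G | ∀ i, t i < Y i p}) :=
          key _ hmeas
      _ ≤ ∑ σ : G, Q {σ} * ∏ i, F (Set.Ioi (t i)) :=
          Finset.sum_le_sum fun σ _ => mul_le_mul_right (hker σ) _
      _ = ∏ i, F (Set.Ioi (t i)) := by rw [← Finset.sum_mul, hsum1, one_mul]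
      _ = ∏ i, P' {p : Ω × G | t i < Y i p} := by
          exact (Finset.prod_congr rfl fun i _ => (hK i).symm)
  · -- exchangeability
    intro π
    have hmul : Measurable (fun σ : G => σ * π) := fun s _ => MeasurableSpace.measurableSet_top
    have hQinv : Measure.map (fun σ : G => σ * π) Q = Q := by
      refine MeasureTheory.Measure.ext_iff_singleton.mpr fun σ => ?_
      rw [Measure.map_apply hmul (measurableSet_singleton σ)]
      have hpre : (fun σ' : G => σ' * π) ⁻¹' {σ} = {σ * π⁻¹} := by
        ext τ
        simp [Set.mem_preimage, mul_inv_eq_iff_eq_mul, eq_comm]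
      rw [hpre, hQs, hQs]
    have hTmap : Measure.map (Prod.map (id : Ω → Ω) (fun σ : G => σ * π)) P' = P' := by
      rw [hP', ← Measure.map_prod_map _ _ measurable_id hmul, Measure.map_id, hQinv]
    have comp : (fun p : Ω × G => fun i => Y (π i) p)
        = (fun p : Ω × G => fun i => Y i p) ∘ (Prod.map (id : Ω → Ω) (fun σ : G => σ * π)) := by
      funext p
      funext i
      show X (p.2 (π i)) p.1 = X ((p.2 * π) i) p.1
      rw [Equiv.Perm.mul_apply]
    have hmeasY : Measurable (fun p : Ω × G => fun i => Y i p) :=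
      measurable_pi_lambda _ hYm
    rw [comp, ← Measure.map_map hmeasY (measurable_id.prodMap hmul), hTmap]
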